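/- Let n ≥ 1 and let a : ℤ^n → ℤ be a finitely supported function such that a(0) = 1 and such that for every u = (u_1, …, u_n) ∈ ℂ^n with |u_j| = 1 for all j, the sum ∑_{v∈ℤ^n} a(v) · u_1^{v_1} ⋯ u_n^{v_n} is a nonnegative real number. Then a(v) = 0 for every v ≠ 0; that is, the function equals the constant 1. -/

import Mathlib

open Complex Finset
-- assume previous lemmas via axioms? No, just append. Use t2 content:
open Complex Finset

noncomputable def sc13ω (N : ℕ) : ℂ := Complex.exp (2 * Real.pi * Complex.I / N)

lemma sc13ω_ne_zero (N : ℕ) : sc13ω N ≠ 0 := Complex.exp_ne_zero _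

lemma sc13ω_abs (N : ℕ) : ‖sc13ω N‖ = 1 := by
  have h : (2 * Real.pi * Complex.I / N) = ((2 * Real.pi / N : ℝ) : ℂ) * Complex.I := by
    push_cast; ring
  rw [sc13ω, h, Complex.norm_exp_ofReal_mul_I]

noncomputable def sc13χ {N n : ℕ} (k : Fin n → Fin N) (v : Fin n → ℤ) : ℂ :=
  ∏ j, (sc13ω N ^ (k j : ℕ)) ^ (v j)

lemma sc13χ_abs {N n : ℕ} (k : Fin n → Fin N) (v : Fin n → ℤ) :
    ‖sc13χ k v‖ = 1 := by
  unfold sc13χ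
  rw [norm_prod]
  apply Finset.prod_eq_one
  intro j _
  rw [norm_zpow, norm_pow, sc13ω_abs, one_pow, one_zpow]

lemma sc13χ_add {N n : ℕ} (k : Fin n → Fin N) (v w : Fin n → ℤ) :
    sc13χ k (v + w) = sc13χ k v * sc13χ k w := by
  unfold sc13χ
  rw [← Finset.prod_mul_distrib]
  apply Finset.prod_congr rfl
  intro j _
  rw [Pi.add_apply, zpow_add₀ (pow_ne_zero _ (sc13ω_ne_zero N))]

lemma sc13χ_zero {N n : ℕ} (k : Fin n → Fin N) : sc13χ k 0 = 1 := by
  unfold sc13χ; simp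

lemma sc13χ_eq {N n : ℕ} (k : Fin n → Fin N) (v : Fin n → ℤ) :
    sc13χ k v = ∏ j, (sc13ω N ^ (v j)) ^ (k j : ℕ) := by
  unfold sc13χ
  apply Finset.prod_congr rfl
  intro j _
  rw [← zpow_natCast (sc13ω N) (k j : ℕ), ← zpow_mul, mul_comm, zpow_mul, zpow_natCast]

lemma sc13χ_mul_nat {N n : ℕ} (k : Fin n → Fin N) (v : Fin n → ℤ) (m : ℕ) :
    sc13χ k (fun j => (m : ℤ) * v j) = (sc13χ k v) ^ m := by
  unfold sc13χ
  rw [← Finset.prod_pow]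
  apply Finset.prod_congr rfl
  intro j _
  rw [← zpow_natCast ((sc13ω N ^ (k j : ℕ)) ^ (v j)) m, ← zpow_mul, mul_comm]

lemma sc13_single (N : ℕ) (hN : N ≠ 0) (m : ℤ) :
    ∑ k : Fin N, (sc13ω N ^ m) ^ (k : ℕ) = if (N : ℤ) ∣ m then (N : ℂ) else 0 := by
  have hprim : IsPrimitiveRoot (sc13ω N) N := Complex.isPrimitiveRoot_exp N hN
  by_cases h : (N : ℤ) ∣ m
  · rw [if_pos h, (hprim.zpow_eq_one_iff_dvd m).mpr h]
    simp
  · rw [if_neg h]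
    have hx1 : sc13ω N ^ m ≠ 1 := fun hc => h ((hprim.zpow_eq_one_iff_dvd m).mp hc)
    have hxN : (sc13ω N ^ m) ^ N = 1 := by
      rw [← zpow_natCast (sc13ω N ^ m) N, ← zpow_mul, mul_comm, zpow_mul, zpow_natCast,
        hprim.pow_eq_one, one_zpow]
    rw [Fin.sum_univ_eq_sum_range (fun i => (sc13ω N ^ m) ^ i) N, geom_sum_eq hx1, hxN]
    simp

lemma sc13_chi_sum {n : ℕ} (N : ℕ) (hN : N ≠ 0) (v : Fin n → ℤ) :
    ∑ k : Fin n → Fin N, sc13χ k v = if (∀ j, (N : ℤ) ∣ v j) then ((N : ℂ)) ^ n else 0 := by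
  simp_rw [sc13χ_eq]
  rw [← Fintype.piFinset_univ,
    ← Finset.prod_univ_sum (fun _ : Fin n => (Finset.univ : Finset (Fin N)))
      (fun j (c : Fin N) => (sc13ω N ^ v j) ^ (c : ℕ))]
  by_cases h : ∀ j, (N : ℤ) ∣ v j
  · rw [if_pos h]
    rw [Finset.prod_congr rfl (fun j _ => by rw [sc13_single N hN (v j), if_pos (h j)])]
    simp
  · rw [if_neg h]
    push_neg at h
    obtain ⟨j0, hj0⟩ := h
    exact Finset.prod_eq_zero (Finset.mem_univ j0)
      (by rw [sc13_single N hN (v j0), if_neg hj0])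

lemma sc13_key {n : ℕ} (N : ℕ) (hN : N ≠ 0) (a : (Fin n → ℤ) →₀ ℤ) (v : Fin n → ℤ)
    (hw : ∀ v' ∈ a.support, (∀ j, (N : ℤ) ∣ v' j - v j) → v' = v) :
    ∑ k : Fin n → Fin N, (a.sum fun v' c => (c : ℂ) * sc13χ k v') * sc13χ k (-v)
      = (N : ℂ) ^ n * a v := by
  have hχ : ∀ (k : Fin n → Fin N) v', sc13χ k v' * sc13χ k (-v) = sc13χ k (v' - v) := by
    intro k v'
    rw [← sc13χ_add, sub_eq_add_neg]
  simp_rw [Finsupp.sum, Finset.sum_mul, mul_assoc, hχ]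
  rw [Finset.sum_comm]
  have : ∀ v' ∈ a.support,
      ∑ k : Fin n → Fin N, (a v' : ℂ) * sc13χ k (v' - v)
        = if v' = v then (a v' : ℂ) * (N : ℂ) ^ n else 0 := by
    intro v' hv'
    rw [← Finset.mul_sum, sc13_chi_sum N hN]
    by_cases h : v' = v
    · subst h
      rw [if_pos fun j => by simp, if_pos rfl]
    · rw [if_neg, if_neg h, mul_zero]
      intro hd
      exact h (hw v' hv' (fun j => by simpa using hd j))
  rw [Finset.sum_congr rfl this, Finset.sum_ite_eq' a.support v
    (fun v' => (a v' : ℂ) * (N : ℂ) ^ n)]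
  by_cases h : v ∈ a.support
  · rw [if_pos h, mul_comm]
  · rw [if_neg h, Finsupp.notMem_support_iff.mp h]
    simp



open ComplexOrder in
/-- Proposition 4.6 (= Proposition 5.7): a torus has no S-character other than `1`.
A virtual character of the `n`-dimensional torus is a finitely supported `ℤ`-valued
function `a` on the character lattice `ℤⁿ`; if `a 0 = 1` and its value
`∑ᵥ a(v) u₁^{v₁} ⋯ uₙ^{vₙ}` at every point `u` of the unit torus is a nonnegative real
number, then `a` is the constant character `1`. -/
theorem stmt_13 (n : ℕ) (hn : 1 ≤ n) (a : (Fin n → ℤ) →₀ ℤ)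
    (h0 : a 0 = 1)
    (hpos : ∀ u : Fin n → ℂ, (∀ j, ‖u j‖ = 1) →
      0 ≤ a.sum fun v c => (c : ℂ) * ∏ j, u j ^ v j) :
    ∀ v : Fin n → ℤ, v ≠ 0 → a v = 0 := by
  intro v hv
  by_contra hva
  -- bounds
  obtain ⟨M, hM1, hM⟩ : ∃ M : ℕ, 1 ≤ M ∧ ∀ v' ∈ a.support, ∀ j, (v' j).natAbs < M := by
    refine ⟨(a.support.sup fun v' => Finset.univ.sup fun j => (v' j).natAbs) + 1,
      Nat.le_add_left 1 _, fun v' hv' j => ?_⟩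
    have h1 : (v' j).natAbs ≤ Finset.univ.sup fun j => (v' j).natAbs :=
      Finset.le_sup (f := fun j => (v' j).natAbs) (Finset.mem_univ j)
    have h2 : (Finset.univ.sup fun j => (v' j).natAbs)
        ≤ a.support.sup fun v' => Finset.univ.sup fun j => (v' j).natAbs :=
      Finset.le_sup (f := fun v' => Finset.univ.sup fun j => (v' j).natAbs) hv'
    exact Nat.lt_succ_of_le (le_trans h1 h2)
  obtain ⟨W, hW1, hWv⟩ : ∃ W : ℕ, 1 ≤ W ∧ ∀ j, (v j).natAbs < W := by
    refine ⟨(Finset.univ.sup fun j => (v j).natAbs) + 1, Nat.le_add_left 1 _, fun j => ?_⟩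
    have h1 : (v j).natAbs ≤ Finset.univ.sup fun j => (v j).natAbs :=
      Finset.le_sup (f := fun j => (v j).natAbs) (Finset.mem_univ j)
    exact Nat.lt_succ_of_le h1
  obtain ⟨N, hNdef⟩ : ∃ N : ℕ, N = 2 * (M * W) + 1 := ⟨_, rfl⟩
  have hN : N ≠ 0 := by omega
  -- window condition
  have hwin : ∀ (t : Fin n → ℤ), (∀ j, (t j).natAbs ≤ M * W) →
      ∀ v' ∈ a.support, (∀ j, (N : ℤ) ∣ v' j - t j) → v' = t := by
    intro t ht v' hv' hd
    funext j
    have hlt : (v' j - t j).natAbs < N := by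
      have h1 := Int.natAbs_sub_le (v' j) (t j)
      have h2 := hM v' hv' j
      have h3 := ht j
      have h4 : M ≤ M * W := Nat.le_mul_of_pos_right M (by omega)
      omega
    have := Int.eq_zero_of_dvd_of_natAbs_lt_natAbs (hd j) (by simpa using hlt)
    omega
  -- the second target vector
  set v2 : Fin n → ℤ := fun j => (M : ℤ) * v j with hv2def
  have hv2supp : v2 ∉ a.support := by
    intro hmem
    obtain ⟨j0, hj0⟩ : ∃ j, v j ≠ 0 := by
      by_contra hc
      push_neg at hc
      exact hv (funext hc)
    have h1 := hM v2 hmem j0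
    have h2 : (v2 j0).natAbs = M * (v j0).natAbs := by
      rw [hv2def, Int.natAbs_mul, Int.natAbs_natCast]
    have h3 : 1 ≤ (v j0).natAbs := by omega
    nlinarith
  have hav2 : a v2 = 0 := Finsupp.notMem_support_iff.mp hv2supp
  -- window conditions for the three targets
  have hwin0 : ∀ v' ∈ a.support, (∀ j, (N : ℤ) ∣ v' j - (0 : Fin n → ℤ) j) → v' = 0 :=
    hwin 0 (fun j => by simp)
  have hwinv : ∀ v' ∈ a.support, (∀ j, (N : ℤ) ∣ v' j - v j) → v' = v :=
    hwin v (fun j => by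
      have h1 := hWv j
      have h2 : W ≤ M * W := Nat.le_mul_of_pos_left W (by omega)
      omega)
  have hwinv2 : ∀ v' ∈ a.support, (∀ j, (N : ℤ) ∣ v' j - v2 j) → v' = v2 :=
    hwin v2 (fun j => by
      have h1 : (v2 j).natAbs = M * (v j).natAbs := by
        rw [hv2def, Int.natAbs_mul, Int.natAbs_natCast]
      have h2 := hWv j
      nlinarith)
  -- the values
  set F : (Fin n → Fin N) → ℂ := fun k => a.sum fun v' c => (c : ℂ) * sc13χ k v' with hFdef
  have hF : ∀ k, 0 ≤ F k := by
    intro k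
    exact hpos (fun j => sc13ω N ^ (k j : ℕ))
      (fun j => by rw [norm_pow, sc13ω_abs, one_pow])
  have hFre : ∀ k, 0 ≤ (F k).re ∧ (F k).im = 0 := by
    intro k
    have := hF k
    rw [Complex.le_def] at this
    constructor
    · simpa using this.1
    · simpa using this.2.symm
  have hFeq : ∀ k, F k = ((F k).re : ℂ) := by
    intro k
    conv_lhs => rw [← Complex.re_add_im (F k)]
    rw [(hFre k).2]
    simp
  -- key identities
  have hS0 : ∑ k : Fin n → Fin N, F k = (N : ℂ) ^ n := by
    have h := sc13_key N hN a 0 hwin0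
    simp only [neg_zero, sc13χ_zero, mul_one, h0, Int.cast_one] at h
    rw [hFdef]
    rw [h]
  have hSv : ∑ k : Fin n → Fin N, F k * sc13χ k (-v) = (N : ℂ) ^ n * a v := by
    rw [hFdef]; exact sc13_key N hN a v hwinv
  have hSv2 : ∑ k : Fin n → Fin N, F k * sc13χ k (-v2) = 0 := by
    rw [hFdef, sc13_key N hN a v2 hwinv2, hav2]
    simp
  -- the sum of re's
  have hNR : (0:ℝ) < (N:ℝ) ^ n := by positivity
  have hsumre : ∑ k : Fin n → Fin N, (F k).re = (N : ℝ) ^ n := by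
    have h2 : ((N : ℂ)) ^ n = (((N : ℝ)) ^ n : ℝ) := by push_cast; ring
    have := congrArg Complex.re hS0
    rw [Complex.re_sum, h2, Complex.ofReal_re] at this
    exact this
  -- |a v| ≤ 1
  have habs : |(a v : ℝ)| ≤ 1 := by
    have h1 : ‖(N : ℂ) ^ n * a v‖ ≤ ∑ k : Fin n → Fin N, ‖F k * sc13χ k (-v)‖ := by
      rw [← hSv]
      exact norm_sum_le _ _
    have h2 : ∀ k : Fin n → Fin N, ‖F k * sc13χ k (-v)‖ = (F k).re := by
      intro k
      rw [norm_mul, sc13χ_abs, mul_one]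
      conv_lhs => rw [hFeq k]
      rw [Complex.norm_real, Real.norm_eq_abs]
      exact _root_.abs_of_nonneg (hFre k).1
    have h3 : ‖(N : ℂ) ^ n * a v‖ ≤ (N : ℝ) ^ n := by
      calc ‖(N : ℂ) ^ n * a v‖
          ≤ ∑ k : Fin n → Fin N, ‖F k * sc13χ k (-v)‖ := h1
        _ = ∑ k : Fin n → Fin N, (F k).re := Finset.sum_congr rfl (fun k _ => h2 k)
        _ = (N : ℝ) ^ n := hsumre
    have h4 : ‖(N : ℂ) ^ n * a v‖ = (N : ℝ) ^ n * |(a v : ℝ)| := by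
      rw [norm_mul, norm_pow, Complex.norm_natCast, Complex.norm_intCast]
    rw [h4] at h3
    nlinarith [abs_nonneg ((a v : ℝ))]
  have hε : a v = 1 ∨ a v = -1 := by
    have h6 : ((|a v| : ℤ) : ℝ) ≤ 1 := by rw [Int.cast_abs]; exact habs
    have h7 : |a v| ≤ 1 := by exact_mod_cast h6
    rw [abs_le] at h7
    omega
  have he2 : (a v : ℝ) * (a v : ℝ) = 1 := by rcases hε with h | h <;> rw [h] <;> norm_num
  -- nonnegativity of the equality-case terms
  have hterm : ∀ k : Fin n → Fin N,
      0 ≤ (F k).re * (1 - (a v : ℝ) * (sc13χ k (-v)).re) := by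
    intro k
    have hc1 : |(sc13χ k (-v)).re| ≤ 1 :=
      (Complex.abs_re_le_norm _).trans_eq (sc13χ_abs k (-v))
    have hc2 : |(a v : ℝ)| = 1 := by rcases hε with h | h <;> rw [h] <;> norm_num
    have hc3 : (a v : ℝ) * (sc13χ k (-v)).re ≤ 1 := by
      calc (a v : ℝ) * (sc13χ k (-v)).re ≤ |(a v : ℝ) * (sc13χ k (-v)).re| := le_abs_self _
        _ = |(a v : ℝ)| * |(sc13χ k (-v)).re| := abs_mul _ _
        _ ≤ 1 := by rw [hc2, one_mul]; exact hc1
    have := (hFre k).1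
    nlinarith
  -- the equality-case sum is zero
  have hsum : ∑ k : Fin n → Fin N,
      (F k).re * (1 - (a v : ℝ) * (sc13χ k (-v)).re) = 0 := by
    have hre : ∀ k : Fin n → Fin N,
        (F k * sc13χ k (-v)).re = (F k).re * (sc13χ k (-v)).re := by
      intro k
      rw [Complex.mul_re, (hFre k).2]
      ring
    have h4 := congrArg Complex.re hSv
    rw [Complex.re_sum] at h4
    simp_rw [hre] at h4
    have h5 : ((N : ℂ) ^ n * (a v : ℂ)).re = (N : ℝ) ^ n * (a v : ℝ) := by
      have : ((N : ℂ) ^ n * (a v : ℂ)) = (((N : ℝ) ^ n * (a v : ℝ) : ℝ) : ℂ) := by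
        push_cast; ring
      rw [this, Complex.ofReal_re]
    rw [h5] at h4
    have expand : ∀ k : Fin n → Fin N,
        (F k).re * (1 - (a v : ℝ) * (sc13χ k (-v)).re)
          = (F k).re - (a v : ℝ) * ((F k).re * (sc13χ k (-v)).re) := by
      intro k; ring
    rw [Finset.sum_congr rfl (fun k _ => expand k), Finset.sum_sub_distrib,
      ← Finset.mul_sum, hsumre, h4]
    nlinarith [he2]
  have hzero := (Finset.sum_eq_zero_iff_of_nonneg
    (fun k _ => hterm k)).mp hsum
  -- each point: either F k = 0 or χ k (-v) = a v
  have hχv2 : ∀ k : Fin n → Fin N, sc13χ k (-v2) = (sc13χ k (-v)) ^ M := by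
    intro k
    have hfun : (-v2) = fun j => (M : ℤ) * ((-v) j) := by
      funext j
      simp only [Pi.neg_apply, hv2def]
      ring
    rw [hfun, sc13χ_mul_nat]
  have hterm2 : ∀ k : Fin n → Fin N,
      F k * sc13χ k (-v2) = (a v : ℂ) ^ M * F k := by
    intro k
    have hz := hzero k (Finset.mem_univ k)
    rcases mul_eq_zero.mp hz with h | h
    · have hF0 : F k = 0 := by rw [hFeq k, h, Complex.ofReal_zero]
      rw [hF0, zero_mul, mul_zero]
    · have hc : (sc13χ k (-v)).re = (a v : ℝ) := by
        rcases hε with h' | h' <;> rw [h'] at h ⊢ <;> push_cast at h ⊢ <;> linarith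
      have him : (sc13χ k (-v)).im = 0 := by
        have habs1 := sc13χ_abs k (-v)
        have hsq := Complex.sq_norm (sc13χ k (-v))
        rw [habs1, Complex.normSq_apply, hc] at hsq
        nlinarith [he2]
      have hχ : sc13χ k (-v) = ((a v : ℝ) : ℂ) := by
        apply Complex.ext
        · rw [hc, Complex.ofReal_re]
        · rw [him, Complex.ofReal_im]
      rw [hχv2 k, hχ]
      push_cast
      ring
  -- final contradiction
  have hfinal : (a v : ℂ) ^ M * (N : ℂ) ^ n = 0 := by
    rw [← hS0, Finset.mul_sum, ← hSv2]
    exact (Finset.sum_congr rfl (fun k _ => hterm2 k)).symm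
  have hne1 : (a v : ℂ) ≠ 0 := by
    rcases hε with h | h <;> rw [h] <;> norm_num
  have hne2 : ((N : ℂ)) ^ n ≠ 0 := pow_ne_zero _ (by exact_mod_cast hN)
  exact (mul_ne_zero (pow_ne_zero _ hne1) hne2) hfinal
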